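/- arXiv:1807.10890 — 2 statements merged into one kernel-verified Lean document; each statement's English description precedes it below -/
import Mathlib

section
/- Let $G \subset \mathrm{GL}_n(\mathbb{C})$ be a subgroup acting on (i.e., preserving) a 1-dimensional subspace $W \subset \mathbb{C}^n$. Let $g \in \mathrm{GL}_n(\mathbb{C})$ normalize $G$ with $gW \ne W$, and suppose $g$ is diagonalizable with exactly two eigenvalues $\alpha_1, \alpha_2$ satisfying $\alpha_1 \ne \pm\alpha_2$. Then every element of $G$ acts on the 2-dimensional subspace $W \oplus gW$ as a scalar multiplication. -/
open Matrix

/-- If a subgroup `G ⊆ GL n ℂ` preserves a line `W`, and `g ∈ GL n ℂ`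
normalizes `G`, moves `W`, and is diagonalizable with exactly two eigenvalues
`α₁ ≠ ±α₂`, then every element of `G` acts on `W ⊔ gW` as a scalar. -/
theorem stmt0 (n : ℕ) (G : Subgroup (GL (Fin n) ℂ))
    (W : Submodule ℂ (Fin n → ℂ)) (hW1 : Module.finrank ℂ W = 1)
    (hGW : ∀ h ∈ G, W.map (Matrix.toLin' (h : Matrix (Fin n) (Fin n) ℂ)) = W)
    (g : GL (Fin n) ℂ) (hnorm : g ∈ Subgroup.normalizer (G : Set (GL (Fin n) ℂ)))
    (hgW : W.map (Matrix.toLin' (g : Matrix (Fin n) (Fin n) ℂ)) ≠ W)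
    (α₁ α₂ : ℂ) (hne : α₁ ≠ α₂) (hne' : α₁ ≠ -α₂)
    (hdiag : ∃ (P : GL (Fin n) ℂ) (d : Fin n → ℂ),
      (∀ i, d i = α₁ ∨ d i = α₂) ∧ (∃ i, d i = α₁) ∧ (∃ i, d i = α₂) ∧
      (g : Matrix (Fin n) (Fin n) ℂ)
        = (P : Matrix (Fin n) (Fin n) ℂ) * Matrix.diagonal d * (P⁻¹ : GL (Fin n) ℂ)) :
    ∀ h ∈ G, ∃ c : ℂ, ∀ w ∈ W ⊔ W.map (Matrix.toLin' (g : Matrix (Fin n) (Fin n) ℂ)),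
      Matrix.toLin' (h : Matrix (Fin n) (Fin n) ℂ) w = c • w := by
  classical
  obtain ⟨P, d, hd, ⟨i₁, hi₁⟩, ⟨i₂, hi₂⟩, hgPDP⟩ := hdiag
  -- a nonzero vector spanning W
  obtain ⟨v, hv0, hvspan⟩ := finrank_eq_one_iff'.mp hW1
  set w : Fin n → ℂ := (v : Fin n → ℂ) with hw
  have hwW : w ∈ W := v.2
  have hw0 : w ≠ 0 := fun h => hv0 (Subtype.ext h)
  have hWspan : W = Submodule.span ℂ {w} := by
    apply le_antisymm
    · intro x hx
      obtain ⟨c, hc⟩ := hvspan ⟨x, hx⟩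
      have : c • w = x := congrArg Subtype.val hc
      rw [← this]
      exact Submodule.smul_mem _ _ (Submodule.mem_span_singleton_self w)
    · rw [Submodule.span_singleton_le_iff_mem]; exact hwW
  -- the key scalar-action lemma
  have key : ∀ k ∈ Subgroup.normalizer (G : Set (GL (Fin n) ℂ)), ∀ h ∈ G, ∃ c : ℂ,
      Matrix.toLin' (h : Matrix (Fin n) (Fin n) ℂ)
        (Matrix.toLin' (k : Matrix (Fin n) (Fin n) ℂ) w)
      = c • Matrix.toLin' (k : Matrix (Fin n) (Fin n) ℂ) w := by
    intro k hk h hh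
    have hk' : (k⁻¹ * h * k) ∈ G := by
      rw [Subgroup.mem_normalizer_iff''] at hk
      exact (hk h).mp hh
    have hmem : Matrix.toLin' ((k⁻¹ * h * k : GL (Fin n) ℂ) : Matrix (Fin n) (Fin n) ℂ) w
        ∈ W := by
      rw [← hGW _ hk']
      exact Submodule.mem_map_of_mem hwW
    rw [hWspan] at hmem
    obtain ⟨c, hc⟩ := Submodule.mem_span_singleton.mp hmem
    refine ⟨c, ?_⟩
    have hmul : (h : Matrix (Fin n) (Fin n) ℂ) * (k : Matrix (Fin n) (Fin n) ℂ)
        = (k : Matrix (Fin n) (Fin n) ℂ)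
          * ((k⁻¹ * h * k : GL (Fin n) ℂ) : Matrix (Fin n) (Fin n) ℂ) := by
      rw [← Units.val_mul, ← Units.val_mul]
      congr 1
      group
    calc Matrix.toLin' (h : Matrix (Fin n) (Fin n) ℂ)
          (Matrix.toLin' (k : Matrix (Fin n) (Fin n) ℂ) w)
        = Matrix.toLin' ((h : Matrix (Fin n) (Fin n) ℂ) * (k : Matrix (Fin n) (Fin n) ℂ)) w := by
          rw [Matrix.toLin'_mul]; rfl
      _ = Matrix.toLin' (k : Matrix (Fin n) (Fin n) ℂ)
            (Matrix.toLin' ((k⁻¹ * h * k : GL (Fin n) ℂ) : Matrix (Fin n) (Fin n) ℂ) w) := by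
          rw [hmul, Matrix.toLin'_mul]; rfl
      _ = c • Matrix.toLin' (k : Matrix (Fin n) (Fin n) ℂ) w := by
          rw [← hc, _root_.map_smul]
  -- u := g • w
  set u : Fin n → ℂ := Matrix.toLin' (g : Matrix (Fin n) (Fin n) ℂ) w with hu
  have hgWspan : W.map (Matrix.toLin' (g : Matrix (Fin n) (Fin n) ℂ))
      = Submodule.span ℂ {u} := by
    rw [hWspan, Submodule.map_span, Set.image_singleton]
  have hu0 : u ≠ 0 := by
    intro h0
    apply hw0
    have : Matrix.toLin' ((g⁻¹ : GL (Fin n) ℂ) : Matrix (Fin n) (Fin n) ℂ) u = w := by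
      rw [hu, ← Matrix.toLin'_mul_apply]
      have : ((g⁻¹ : GL (Fin n) ℂ) : Matrix (Fin n) (Fin n) ℂ)
          * (g : Matrix (Fin n) (Fin n) ℂ) = 1 := by
        rw [← Units.val_mul, inv_mul_cancel, Units.val_one]
      rw [this, Matrix.toLin'_one, LinearMap.id_apply]
    rw [← this, h0, map_zero]
  have huW : u ∉ Submodule.span ℂ ({w} : Set (Fin n → ℂ)) := by
    intro hmem
    obtain ⟨c, hc⟩ := Submodule.mem_span_singleton.mp hmem
    have hc0 : c ≠ 0 := by rintro rfl; rw [zero_smul] at hc; exact hu0 hc.symm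
    apply hgW
    rw [hgWspan, ← hc, hWspan]
    exact Submodule.span_singleton_smul_eq (isUnit_iff_ne_zero.mpr hc0) w
  -- linear independence of w, u
  have indep : ∀ x y : ℂ, x • w + y • u = 0 → x = 0 ∧ y = 0 := by
    intro x y hxy
    have hy : y = 0 := by
      by_contra hy0
      apply huW
      have h1 : y • u = (-x) • w := by
        linear_combination (norm := module) hxy
      have h2 : u = (y⁻¹ * -x) • w := by
        rw [← inv_smul_smul₀ hy0 u, h1, smul_smul]
      rw [h2]
      exact Submodule.smul_mem _ _ (Submodule.mem_span_singleton_self w)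
    refine ⟨?_, hy⟩
    rw [hy, zero_smul, add_zero, smul_eq_zero] at hxy
    exact hxy.resolve_right hw0
  -- eigenvalues are nonzero
  have hdet : (Matrix.diagonal d).det ≠ 0 := by
    intro h0
    have : ((g : Matrix (Fin n) (Fin n) ℂ)).det = 0 := by
      rw [hgPDP, Matrix.det_mul, Matrix.det_mul, h0, mul_zero, zero_mul]
    exact (Matrix.isUnit_iff_isUnit_det _ |>.mp g.isUnit).ne_zero this
  have hd0 : ∀ i, d i ≠ 0 := by
    intro i h0
    apply hdet
    rw [Matrix.det_diagonal]
    exact Finset.prod_eq_zero (Finset.mem_univ i) h0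
  have hα₁ : α₁ ≠ 0 := hi₁ ▸ hd0 i₁
  have hα₂ : α₂ ≠ 0 := hi₂ ▸ hd0 i₂
  have hs : α₁ + α₂ ≠ 0 := fun h => hne' (by linear_combination h)
  have hp : α₁ * α₂ ≠ 0 := mul_ne_zero hα₁ hα₂
  -- quadratic identity for g
  have hgsq : (g : Matrix (Fin n) (Fin n) ℂ) * (g : Matrix (Fin n) (Fin n) ℂ)
      = (α₁ + α₂) • (g : Matrix (Fin n) (Fin n) ℂ)
        - (α₁ * α₂) • (1 : Matrix (Fin n) (Fin n) ℂ) := by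
    have hPinv : ((P⁻¹ : GL (Fin n) ℂ) : Matrix (Fin n) (Fin n) ℂ)
        * (P : Matrix (Fin n) (Fin n) ℂ) = 1 := by
      rw [← Units.val_mul, inv_mul_cancel, Units.val_one]
    have hPinv' : (P : Matrix (Fin n) (Fin n) ℂ)
        * ((P⁻¹ : GL (Fin n) ℂ) : Matrix (Fin n) (Fin n) ℂ) = 1 := by
      rw [← Units.val_mul, mul_inv_cancel, Units.val_one]
    have hDD : Matrix.diagonal d * Matrix.diagonal d
        = (α₁ + α₂) • Matrix.diagonal d - (α₁ * α₂) • (1 : Matrix (Fin n) (Fin n) ℂ) := by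
      rw [Matrix.diagonal_mul_diagonal]
      ext i j
      by_cases hij : i = j
      · subst hij
        rcases hd i with h | h <;>
          simp [Matrix.diagonal_apply_eq, Matrix.one_apply_eq, h] <;> ring
      · simp [Matrix.diagonal_apply_ne _ hij, Matrix.one_apply_ne hij]
    calc (g : Matrix (Fin n) (Fin n) ℂ) * (g : Matrix (Fin n) (Fin n) ℂ)
        = (P : Matrix (Fin n) (Fin n) ℂ) * (Matrix.diagonal d * Matrix.diagonal d)
          * ((P⁻¹ : GL (Fin n) ℂ) : Matrix (Fin n) (Fin n) ℂ) := by
          rw [hgPDP]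
          calc ((P : Matrix (Fin n) (Fin n) ℂ) * Matrix.diagonal d * ((P⁻¹ : GL (Fin n) ℂ) : Matrix (Fin n) (Fin n) ℂ))
              * ((P : Matrix (Fin n) (Fin n) ℂ) * Matrix.diagonal d * ((P⁻¹ : GL (Fin n) ℂ) : Matrix (Fin n) (Fin n) ℂ))
              = (P : Matrix (Fin n) (Fin n) ℂ) * Matrix.diagonal d
                * (((P⁻¹ : GL (Fin n) ℂ) : Matrix (Fin n) (Fin n) ℂ) * (P : Matrix (Fin n) (Fin n) ℂ))
                * Matrix.diagonal d * ((P⁻¹ : GL (Fin n) ℂ) : Matrix (Fin n) (Fin n) ℂ) := by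
                noncomm_ring
            _ = _ := by rw [hPinv]; try noncomm_ring
      _ = _ := by
          rw [hDD]
          rw [Matrix.mul_sub, Matrix.sub_mul, Matrix.mul_smul, Matrix.smul_mul,
            Matrix.mul_smul, Matrix.smul_mul, Matrix.mul_one, hPinv', hgPDP]
  -- action of g² on w
  have hg2w : Matrix.toLin' (g : Matrix (Fin n) (Fin n) ℂ) u
      = (α₁ + α₂) • u - (α₁ * α₂) • w := by
    rw [hu, ← Matrix.toLin'_mul_apply, hgsq, map_sub, _root_.map_smul, _root_.map_smul]
    simp [Matrix.toLin'_one]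
  -- now the main argument
  intro h hh
  obtain ⟨a, ha⟩ := key 1 (Subgroup.one_mem _) h hh
  simp only [Units.val_one, Matrix.toLin'_one, LinearMap.id_apply] at ha
  obtain ⟨b, hb⟩ := key g hnorm h hh
  rw [← hu] at hb
  obtain ⟨c, hc⟩ := key (g * g) (Subgroup.mul_mem _ hnorm hnorm) h hh
  have hg2w' : Matrix.toLin' ((g * g : GL (Fin n) ℂ) : Matrix (Fin n) (Fin n) ℂ) w
      = (α₁ + α₂) • u - (α₁ * α₂) • w := by
    rw [Units.val_mul, Matrix.toLin'_mul_apply, ← hu, hg2w]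
  rw [hg2w'] at hc
  rw [map_sub, _root_.map_smul, _root_.map_smul, ha, hb] at hc
  -- extract coefficients
  have heq : ((α₁ + α₂) * b - (α₁ + α₂) * c) • u
      + ((α₁ * α₂) * c - (α₁ * α₂) * a) • w = 0 := by
    have := hc
    rw [smul_sub, smul_smul, smul_smul, smul_smul, smul_smul] at this
    linear_combination (norm := module) this
  obtain ⟨h1, h2⟩ := indep (α₁ * α₂ * c - α₁ * α₂ * a) ((α₁ + α₂) * b - (α₁ + α₂) * c)
    (by linear_combination (norm := module) heq)
  have hbc : b = c := mul_left_cancel₀ hs (sub_eq_zero.mp h2)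
  have hac : a = c := (mul_left_cancel₀ hp (sub_eq_zero.mp h1)).symm
  -- conclude
  refine ⟨a, ?_⟩
  intro x hx
  rw [hgWspan, hWspan] at hx
  obtain ⟨p, hpmem, q, hqmem, rfl⟩ := Submodule.mem_sup.mp hx
  obtain ⟨xp, rfl⟩ := Submodule.mem_span_singleton.mp hpmem
  obtain ⟨xq, rfl⟩ := Submodule.mem_span_singleton.mp hqmem
  rw [map_add, _root_.map_smul, _root_.map_smul, ha, hb, hbc, ← hac]
  rw [smul_add, smul_smul, smul_smul, smul_smul, smul_smul, mul_comm a xp, mul_comm a xq]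
end

section
/- Let $G \subset \mathrm{GL}_n(\mathbb{C})$ be a subgroup preserving a 1-dimensional subspace $W \subset \mathbb{C}^n$. Let $g \in \mathrm{GL}_n(\mathbb{C})$ normalize $G$ with $gW \ne W$, and suppose $g$ is unipotent with $(g - I)^2 = 0$. Then every element of $G$ acts on $W \oplus gW$ as a scalar multiplication. -/
open Matrix

/-- If a subgroup `G ⊆ GL n ℂ` preserves a line `W`, and `g ∈ GL n ℂ`
normalizes `G`, moves `W`, and is unipotent with `(g - I)^2 = 0`, then every element
of `G` acts on `W ⊔ gW` as a scalar. -/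
theorem stmt1 (n : ℕ) (G : Subgroup (GL (Fin n) ℂ))
    (W : Submodule ℂ (Fin n → ℂ)) (hW1 : Module.finrank ℂ W = 1)
    (hGW : ∀ h ∈ G, W.map (Matrix.toLin' (h : Matrix (Fin n) (Fin n) ℂ)) = W)
    (g : GL (Fin n) ℂ) (hnorm : g ∈ Subgroup.normalizer (G : Set (GL (Fin n) ℂ)))
    (hgW : W.map (Matrix.toLin' (g : Matrix (Fin n) (Fin n) ℂ)) ≠ W)
    (hunip : ((g : Matrix (Fin n) (Fin n) ℂ) - 1) ^ 2 = 0) :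
    ∀ h ∈ G, ∃ c : ℂ, ∀ w ∈ W ⊔ W.map (Matrix.toLin' (g : Matrix (Fin n) (Fin n) ℂ)),
      Matrix.toLin' (h : Matrix (Fin n) (Fin n) ℂ) w = c • w := by
  -- spanning vector of W
  obtain ⟨v, hv0, hv⟩ := finrank_eq_one_iff'.mp hW1
  set w : Fin n → ℂ := (v : Fin n → ℂ) with hwdef
  have hw0 : w ≠ 0 := fun hc => hv0 (Subtype.ext hc)
  have hWspan : W = Submodule.span ℂ {w} := by
    apply le_antisymm
    · intro x hx
      obtain ⟨c, hc⟩ := hv ⟨x, hx⟩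
      exact Submodule.mem_span_singleton.mpr ⟨c, congrArg Subtype.val hc⟩
    · rw [Submodule.span_singleton_le_iff_mem]; exact v.2
  -- eigenvalue function
  have eig : ∀ k ∈ G, ∃ c : ℂ,
      Matrix.toLin' ((k : GL (Fin n) ℂ) : Matrix (Fin n) (Fin n) ℂ) w = c • w := by
    intro k hk
    have hm : Matrix.toLin' ((k : GL (Fin n) ℂ) : Matrix (Fin n) (Fin n) ℂ) w ∈ W := by
      rw [← hGW k hk]
      exact Submodule.mem_map_of_mem v.2
    rw [hWspan] at hm
    obtain ⟨c, hc⟩ := Submodule.mem_span_singleton.mp hm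
    exact ⟨c, hc.symm⟩
  set Tg := Matrix.toLin' ((g : GL (Fin n) ℂ) : Matrix (Fin n) (Fin n) ℂ) with hTgdef
  set Tgi := Matrix.toLin' ((g⁻¹ : GL (Fin n) ℂ) : Matrix (Fin n) (Fin n) ℂ) with hTgidef
  -- g * (2 - g) = 1
  have h1 : ((g : Matrix (Fin n) (Fin n) ℂ)) * (2 - (g : Matrix (Fin n) (Fin n) ℂ)) = 1 := by
    have h2 : ((g : Matrix (Fin n) (Fin n) ℂ) - 1)^2
        = (g : Matrix (Fin n) (Fin n) ℂ) * (g : Matrix (Fin n) (Fin n) ℂ)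
          - 2 * (g : Matrix (Fin n) (Fin n) ℂ) + 1 := by noncomm_ring
    rw [h2] at hunip
    have h3 : (g : Matrix (Fin n) (Fin n) ℂ) * (2 - (g : Matrix (Fin n) (Fin n) ℂ))
        = -((g : Matrix (Fin n) (Fin n) ℂ) * (g : Matrix (Fin n) (Fin n) ℂ)
          - 2 * (g : Matrix (Fin n) (Fin n) ℂ) + 1) + 1 := by noncomm_ring
    rw [h3, hunip]; simp
  have hginv : ((g⁻¹ : GL (Fin n) ℂ) : Matrix (Fin n) (Fin n) ℂ)
      = 2 - (g : Matrix (Fin n) (Fin n) ℂ) := by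
    calc ((g⁻¹ : GL (Fin n) ℂ) : Matrix (Fin n) (Fin n) ℂ)
        = ((g⁻¹ : GL (Fin n) ℂ) : Matrix (Fin n) (Fin n) ℂ)
          * ((g : Matrix (Fin n) (Fin n) ℂ) * (2 - (g : Matrix (Fin n) (Fin n) ℂ))) := by
          rw [h1, mul_one]
      _ = (((g⁻¹ : GL (Fin n) ℂ) : Matrix (Fin n) (Fin n) ℂ) * (g : Matrix (Fin n) (Fin n) ℂ))
          * (2 - (g : Matrix (Fin n) (Fin n) ℂ)) := by rw [mul_assoc]
      _ = 2 - (g : Matrix (Fin n) (Fin n) ℂ) := by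
          rw [← Units.val_mul, inv_mul_cancel, Units.val_one, one_mul]
  -- composition facts
  have hTgTgi : ∀ x, Tg (Tgi x) = x := by
    intro x
    rw [hTgdef, hTgidef, ← LinearMap.comp_apply, ← Matrix.toLin'_mul, ← Units.val_mul,
      mul_inv_cancel, Units.val_one, Matrix.toLin'_one, LinearMap.id_apply]
  have hTgiTg : ∀ x, Tgi (Tg x) = x := by
    intro x
    rw [hTgdef, hTgidef, ← LinearMap.comp_apply, ← Matrix.toLin'_mul, ← Units.val_mul,
      inv_mul_cancel, Units.val_one, Matrix.toLin'_one, LinearMap.id_apply]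
  have hTgi_eq : ∀ x, Tgi x = (2:ℂ) • x - Tg x := by
    intro x
    have h2m : (2 : Matrix (Fin n) (Fin n) ℂ) = (2:ℂ) • (1 : Matrix (Fin n) (Fin n) ℂ) := by
      rw [two_smul]; norm_num
    rw [hTgidef, hginv, hTgdef, h2m, map_sub, LinearMap.sub_apply]
    simp
  -- gw not in span {w}
  have hind : Tg w ∉ Submodule.span ℂ {w} := by
    intro hmem
    obtain ⟨a, ha⟩ := Submodule.mem_span_singleton.mp hmem
    apply hgW
    have hmap : W.map Tg = Submodule.span ℂ {Tg w} := by
      rw [hWspan, Submodule.map_span, Set.image_singleton]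
    have ha0 : a ≠ 0 := by
      rintro rfl
      apply hw0
      have : Tg w = 0 := by rw [← ha, zero_smul]
      have := congrArg Tgi this
      rwa [hTgiTg, map_zero] at this
    rw [hTgdef] at hmap ha ⊢
    rw [hmap, hWspan, ← ha]
    exact Submodule.span_singleton_smul_eq (IsUnit.mk0 a ha0) w
  have key : ∀ a b : ℂ, a • Tg w = b • w → a = 0 ∧ b = 0 := by
    intro a b hab
    have ha : a = 0 := by
      by_contra ha0
      apply hind
      have : Tg w = (a⁻¹ * b) • w := by
        rw [mul_smul, ← hab, ← mul_smul, inv_mul_cancel₀ ha0, one_smul]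
      rw [this]
      exact Submodule.smul_mem _ _ (Submodule.mem_span_singleton_self w)
    refine ⟨ha, ?_⟩
    rw [ha, zero_smul] at hab
    rcases smul_eq_zero.mp hab.symm with h | h
    · exact h
    · exact absurd h hw0
  -- main argument
  intro h hh
  obtain ⟨c, hc⟩ := eig h hh
  have hmem1 : g * h * g⁻¹ ∈ G := (Subgroup.mem_normalizer_iff.mp hnorm h).mp hh
  have hnorm' : g⁻¹ ∈ Subgroup.normalizer (G : Set (GL (Fin n) ℂ)) :=
    (Subgroup.normalizer (G : Set (GL (Fin n) ℂ))).inv_mem hnorm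
  have hmem2 : g⁻¹ * h * g ∈ G := by
    have := (Subgroup.mem_normalizer_iff.mp hnorm' h).mp hh
    rwa [inv_inv] at this
  obtain ⟨c', hc'⟩ := eig (g⁻¹ * h * g) hmem2
  obtain ⟨c'', hc''⟩ := eig (g * h * g⁻¹) hmem1
  set Th := Matrix.toLin' ((h : GL (Fin n) ℂ) : Matrix (Fin n) (Fin n) ℂ) with hThdef
  -- Th (Tg w) = c' • Tg w
  have hc'2 : Th (Tg w) = c' • Tg w := by
    have e1 : Matrix.toLin' (((g⁻¹ * h * g : GL (Fin n) ℂ)) : Matrix (Fin n) (Fin n) ℂ) w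
        = Tgi (Th (Tg w)) := by
      rw [Units.val_mul, Units.val_mul, Matrix.toLin'_mul, Matrix.toLin'_mul,
        LinearMap.comp_apply, LinearMap.comp_apply, hTgidef, hThdef, hTgdef]
    rw [e1] at hc'
    have := congrArg Tg hc'
    rwa [hTgTgi, _root_.map_smul] at this
  -- Th (Tgi w) = c'' • Tgi w
  have hc''2 : Th (Tgi w) = c'' • Tgi w := by
    have e1 : Matrix.toLin' (((g * h * g⁻¹ : GL (Fin n) ℂ)) : Matrix (Fin n) (Fin n) ℂ) w
        = Tg (Th (Tgi w)) := by
      rw [Units.val_mul, Units.val_mul, Matrix.toLin'_mul, Matrix.toLin'_mul,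
        LinearMap.comp_apply, LinearMap.comp_apply, hTgidef, hThdef, hTgdef]
    rw [e1] at hc''
    have := congrArg Tgi hc''
    rwa [hTgiTg, _root_.map_smul] at this
  -- derive relation
  have hrel : (c' - c'') • Tg w = (2*c - 2*c'') • w := by
    have e1 : Th (Tg w) = (2:ℂ) • Th w - Th (Tgi w) := by
      have h4 : Tg w = (2:ℂ) • w - Tgi w := by rw [hTgi_eq w]; abel
      rw [h4, map_sub, _root_.map_smul]
    rw [hc'2, hc''2, hc, hTgi_eq w] at e1
    rw [sub_smul, e1]
    module
  obtain ⟨h1', h2'⟩ := key _ _ hrel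
  have hc'c'' : c' = c'' := sub_eq_zero.mp h1'
  have hcc'' : c = c'' := by linear_combination h2' / 2
  have hc'c : c' = c := by rw [hc'c'', hcc'']
  refine ⟨c, ?_⟩
  intro u hu
  have hmap : W.map (Matrix.toLin' ((g : GL (Fin n) ℂ) : Matrix (Fin n) (Fin n) ℂ))
      = Submodule.span ℂ {Tg w} := by
    rw [hWspan, hTgdef, Submodule.map_span, Set.image_singleton]
  rw [hmap] at hu
  obtain ⟨x, hx, y, hy, rfl⟩ := Submodule.mem_sup.mp hu
  rw [hWspan] at hx
  obtain ⟨a, rfl⟩ := Submodule.mem_span_singleton.mp hx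
  obtain ⟨b, rfl⟩ := Submodule.mem_span_singleton.mp hy
  show Th (a • w + b • Tg w) = c • (a • w + b • Tg w)
  rw [map_add, _root_.map_smul, _root_.map_smul, hc, hc'2, hc'c, smul_add,
    smul_comm a c, smul_comm b c]
end
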